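/- Under the stated assumptions and parameter schedules, for every t ≥ 1 the squared gradient norm at the last iterate satisfies ‖G(z_t)‖² ≤ C/t, where C = K²(E + γD)², D = (√12 + 1)‖z_0 − z*‖, and E = max(‖z_2 − z_1‖(1 + γ), 20γD). -/

import Mathlib

set_option maxHeartbeats 1600000

open scoped RealInnerProductSpace

lemma aux2M (M σ : ℝ) (hM2 : M^2 = 12) (hM0 : 0 ≤ M) (hσ0 : 0 < σ) (hσ2 : 2 ≤ σ^2) : 2*M ≤ 5*σ := by
  nlinarith [sq_nonneg (5*σ - 2*M), sq_nonneg (5*σ + 2*M), mul_pos hσ0 hσ0]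

lemma case2_sigma (r σ γ : ℝ) (hr3 : 3 ≤ r) (hr4 : r ≤ 4) (hγ0 : 0 < γ)
    (h : 19*γ*(r+1) ≤ r*σ) : 23*γ ≤ σ := by
  nlinarith [mul_nonneg (show (0:ℝ) ≤ 19-4*r by linarith) hγ0.le]


lemma mul_le_mul4 (c₁ c₂ s m : ℝ) (h1 : 0 ≤ c₁) (h2 : c₁ ≤ c₂) (h3 : s ≤ m)
    (h4 : 0 ≤ m) : c₁*s ≤ c₂*m :=
  le_trans (mul_le_mul_of_nonneg_left h3 h1) (mul_le_mul_of_nonneg_right h2 h4)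

lemma sq_le_imp (x c : ℝ) (hc : 0 ≤ c) (h : x^2 ≤ c^2) (hx : 0 ≤ x) : x ≤ c := by nlinarith

lemma lemB_slack (γ σ τ : ℝ) (hγ : 2 ≤ γ) (hσγ : 23*γ ≤ σ) (hστ : σ^2 = τ^2 + 1) :
    (σ^2-γ)^2 + σ^2 ≤ τ^2*τ^2 - (99/100)*σ^2 := by
  have hσ46 : (46:ℝ) ≤ σ := by linarith
  have h1 : (σ^2-1)^2 - (σ^2-γ)^2 = (γ-1)*(2*σ^2-1-γ) := by ring
  have h2 : 1058*γ ≤ σ^2 := by nlinarith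
  nlinarith [h1, h2, sq_nonneg (σ^2-γ)]

lemma lemB_core (E D b γ σ τ dn x : ℝ)
    (hγ : 2 ≤ γ) (hb : 0 < b) (hDb : D = (Real.sqrt 12 + 1) * b)
    (hED : 20*γ*D ≤ E)
    (hσγ : 23*γ ≤ σ) (hτ0 : 0 < τ) (hστ : σ^2 = τ^2 + 1)
    (hdn0 : 0 ≤ dn) (hdn : dn*τ^2 ≤ E) (hx0 : 0 ≤ x) (hx : x*τ ≤ E + γ*D) :
    ((1-γ/σ^2)^2 + 1/σ^2)*dn^2
     + 2*( (γ/(τ^2*σ^2))*(dn*D) + (1/(2*τ^3))*((γ/τ^2)*(b*x))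
           + (1/σ)*(γ/(τ^2*σ^2))*(dn*D) + (1/σ)*(1/(2*τ^3))*(dn*x) )
     + ( (γ/(τ^2*σ^2))*D + (1/(2*τ^3))*x )^2
    ≤ (E/σ^2)^2 := by
  have hγ0 : (0:ℝ) < γ := by linarith
  have hr3 : (3:ℝ) ≤ Real.sqrt 12 := by
    nlinarith [Real.sq_sqrt (show (0:ℝ) ≤ 12 by norm_num), Real.sqrt_nonneg 12]
  have hD4 : 4*b ≤ D := by
    have := mul_le_mul_of_nonneg_right (show (4:ℝ) ≤ Real.sqrt 12 + 1 by linarith) hb.le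
    linarith [hDb ▸ this]
  have hD0 : 0 < D := by linarith
  have hE0 : 0 < E := by
    have : (0:ℝ) < 20*γ*D := by positivity
    linarith
  have hσ0 : (0:ℝ) < σ := by linarith
  have hσ46 : (46:ℝ) ≤ σ := by linarith
  have hτ23 : (23:ℝ) ≤ τ := by
    apply sq_le_imp _ _ hτ0.le ?_ (by norm_num)
    nlinarith
  have hτσ : τ ≤ σ := by apply sq_le_imp _ _ hσ0.le ?_ hτ0.le; nlinarith
  have hστ2 : σ ≤ 2*τ := by apply sq_le_imp _ _ (by linarith) ?_ hσ0.le; nlinarith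
  have hγD : γ*D ≤ E/20 := by linarith
  have hDE : D ≤ E/(20*γ) := by rw [le_div_iff₀ (by positivity)]; linarith
  have hbE : b ≤ E/(80*γ) := by
    rw [le_div_iff₀ (by positivity)]
    nlinarith
  have hdnE : dn ≤ E/τ^2 := by rw [le_div_iff₀ (by positivity)]; exact hdn
  have hxE : x ≤ (21/20)*E/τ := by rw [le_div_iff₀ hτ0]; linarith
  -- term bounds, in units of E^2/(σ^2*τ^4)
  have hT2 : 2*((γ/(τ^2*σ^2))*(dn*D)) ≤ (1/10)*(E^2/(σ^2*τ^4)) := by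
    have h1 : dn*D ≤ (E/τ^2)*(E/(20*γ)) :=
      mul_le_mul hdnE hDE (by positivity) (by positivity)
    calc 2*((γ/(τ^2*σ^2))*(dn*D)) ≤ 2*((γ/(τ^2*σ^2))*((E/τ^2)*(E/(20*γ)))) := by
          have h2 := mul_le_mul_of_nonneg_left h1 (show (0:ℝ) ≤ γ/(τ^2*σ^2) by positivity)
          linarith
      _ = (1/10)*(E^2/(σ^2*τ^4)) := by field_simp; ring
  have hT3 : 2*((1/(2*τ^3))*((γ/τ^2)*(b*x))) ≤ (21/400)*(E^2/(σ^2*τ^4)) := by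
    have h1 : b*x ≤ (E/(80*γ))*((21/20)*E/τ) :=
      mul_le_mul hbE hxE hx0 (by positivity)
    calc 2*((1/(2*τ^3))*((γ/τ^2)*(b*x))) = (γ/τ^5)*(b*x) := by field_simp
      _ ≤ (γ/τ^5)*((E/(80*γ))*((21/20)*E/τ)) :=
          mul_le_mul_of_nonneg_left h1 (by positivity)
      _ = (21/1600)*(E^2/τ^4)*(1/τ^2) := by field_simp; ring
      _ ≤ (21/1600)*(E^2/τ^4)*(4/σ^2) := by
          have h2 : (1:ℝ)/τ^2 ≤ 4/σ^2 := by
            rw [div_le_div_iff₀ (by positivity) (by positivity)]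
            nlinarith
          exact mul_le_mul_of_nonneg_left h2 (by positivity)
      _ = (21/400)*(E^2/(σ^2*τ^4)) := by field_simp; ring
  have hU0 : (0:ℝ) ≤ E^2/(σ^2*τ^4) := by positivity
  have hT4 : 2*((1/σ)*(γ/(τ^2*σ^2))*(dn*D)) ≤ (1/100)*(E^2/(σ^2*τ^4)) := by
    have h1 : (1:ℝ)/σ ≤ 1/46 := by
      rw [div_le_div_iff₀ (by positivity) (by norm_num)]; linarith
    calc 2*((1/σ)*(γ/(τ^2*σ^2))*(dn*D)) = (1/σ)*(2*((γ/(τ^2*σ^2))*(dn*D))) := by ring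
      _ ≤ (1/46)*(2*((γ/(τ^2*σ^2))*(dn*D))) := by
          apply mul_le_mul_of_nonneg_right h1
          have : (0:ℝ) ≤ γ/(τ^2*σ^2) := by positivity
          positivity
      _ ≤ (1/46)*((1/10)*(E^2/(σ^2*τ^4))) := by
          apply mul_le_mul_of_nonneg_left hT2 (by norm_num)
      _ ≤ (1/100)*(E^2/(σ^2*τ^4)) := by linarith
  have hT5 : 2*((1/σ)*(1/(2*τ^3))*(dn*x)) ≤ (1/10)*(E^2/(σ^2*τ^4)) := by
    have h1 : dn*x ≤ (E/τ^2)*((21/20)*E/τ) :=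
      mul_le_mul hdnE hxE hx0 (by positivity)
    calc 2*((1/σ)*(1/(2*τ^3))*(dn*x)) = (1/(σ*τ^3))*(dn*x) := by
          field_simp
      _ ≤ (1/(σ*τ^3))*((E/τ^2)*((21/20)*E/τ)) :=
          mul_le_mul_of_nonneg_left h1 (by positivity)
      _ = (21/20)*(E^2/(σ*τ^6)) := by field_simp
      _ = ((21/20)*E^2)/(σ*τ^6) := by ring
      _ ≤ ((1/10)*E^2)/(σ^2*τ^4) := by
          rw [div_le_div_iff₀ (by positivity) (by positivity)]
          have h46 : 46*σ ≤ σ*σ := mul_le_mul_of_nonneg_right hσ46 hσ0.le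
          have h21 : (21/2)*σ ≤ τ^2 := by nlinarith
          have h22 := mul_le_mul_of_nonneg_left h21
            (show (0:ℝ) ≤ (1/10)*E^2*σ*τ^4 by positivity)
          nlinarith [h22]
      _ = (1/10)*(E^2/(σ^2*τ^4)) := by ring
  have hT6 : ((γ/(τ^2*σ^2))*D + (1/(2*τ^3))*x)^2 ≤ (1/400)*(E^2/(σ^2*τ^4)) := by
    have hA : (γ/(τ^2*σ^2))*D ≤ (1/20)*E/τ^4 := by
      calc (γ/(τ^2*σ^2))*D = (γ*D)/(τ^2*σ^2) := by ring
        _ ≤ (E/20)/(τ^2*σ^2) := (div_le_div_iff_of_pos_right (by positivity)).mpr hγD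
        _ ≤ (E/20)/(τ^2*τ^2) := by
            apply div_le_div_of_nonneg_left (by positivity) (by positivity)
            nlinarith
        _ = (1/20)*E/τ^4 := by ring
    have hB : (1/(2*τ^3))*x ≤ (21/40)*E/τ^4 := by
      calc (1/(2*τ^3))*x ≤ (1/(2*τ^3))*((21/20)*E/τ) :=
            mul_le_mul_of_nonneg_left hxE (by positivity)
        _ = (21/40)*E/τ^4 := by
            field_simp
            ring
    have hAB : (γ/(τ^2*σ^2))*D + (1/(2*τ^3))*x ≤ (23/40)*E/τ^4 := by
      have e : (1/20)*E/τ^4 + (21/40)*E/τ^4 = (23/40)*E/τ^4 := by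
        field_simp; ring
      linarith
    have hAB0 : (0:ℝ) ≤ (γ/(τ^2*σ^2))*D + (1/(2*τ^3))*x := by positivity
    calc ((γ/(τ^2*σ^2))*D + (1/(2*τ^3))*x)^2 ≤ ((23/40)*E/τ^4)^2 := by
          apply pow_le_pow_left₀ hAB0 hAB
      _ = ((529/1600)*E^2)/τ^8 := by field_simp; ring
      _ ≤ ((1/400)*E^2)/(σ^2*τ^4) := by
          rw [div_le_div_iff₀ (by positivity) (by positivity)]
          have h1 : σ^2 ≤ 4*τ^2 := by nlinarith
          have h2 : (529:ℝ) ≤ τ^2 := by nlinarith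
          have h3 : 529*σ^2 ≤ 4*(τ^2*τ^2) := by nlinarith
          have h4 := mul_le_mul_of_nonneg_left h3
            (show (0:ℝ) ≤ (1/1600)*E^2*τ^4 by positivity)
          nlinarith [h4]
      _ = (1/400)*(E^2/(σ^2*τ^4)) := by ring
  have hscal : ((1-γ/σ^2)^2 + 1/σ^2)*(1/τ^4) + (99/100)*(1/(σ^2*τ^4)) ≤ 1/σ^4 := by
    have key := lemB_slack γ σ τ hγ hσγ hστ
    have e : 1/σ^4 - (((1-γ/σ^2)^2 + 1/σ^2)*(1/τ^4) + (99/100)*(1/(σ^2*τ^4)))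
        = (τ^2*τ^2 - (99/100)*σ^2 - ((σ^2-γ)^2 + σ^2))/(σ^4*τ^4) := by
      field_simp; ring
    have h0 : (0:ℝ) ≤ (τ^2*τ^2 - (99/100)*σ^2 - ((σ^2-γ)^2 + σ^2))/(σ^4*τ^4) := by
      apply div_nonneg ?_ (by positivity)
      linarith
    linarith [e ▸ h0]
  have hS1 : ((1-γ/σ^2)^2 + 1/σ^2)*dn^2
      ≤ (E/σ^2)^2 - (99/100)*(E^2/(σ^2*τ^4)) := by
    have h1 : dn^2 ≤ E^2/τ^4 := by
      have := pow_le_pow_left₀ hdn0 hdnE 2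
      calc dn^2 ≤ (E/τ^2)^2 := this
        _ = E^2/τ^4 := by field_simp
    have hc0 : (0:ℝ) ≤ (1-γ/σ^2)^2 + 1/σ^2 := by positivity
    calc ((1-γ/σ^2)^2 + 1/σ^2)*dn^2 ≤ ((1-γ/σ^2)^2 + 1/σ^2)*(E^2/τ^4) :=
          mul_le_mul_of_nonneg_left h1 hc0
      _ = E^2*(((1-γ/σ^2)^2 + 1/σ^2)*(1/τ^4)) := by ring
      _ ≤ E^2*(1/σ^4 - (99/100)*(1/(σ^2*τ^4))) := by
          apply mul_le_mul_of_nonneg_left ?_ (sq_nonneg E)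
          linarith
      _ = (E/σ^2)^2 - (99/100)*(E^2/(σ^2*τ^4)) := by ring
  linarith only [hS1, hT2, hT3, hT4, hT5, hT6, hU0]


lemma lemA_core (a b β σ M γ : ℝ) (ha0 : 0 ≤ a) (hb : 0 ≤ b) (hγ : 2 ≤ γ)
    (hβ : β*σ^2 = γ) (hβ0 : 0 < β) (hβ1 : β ≤ 1) (hσ0 : 0 < σ)
    (hM2 : M^2 = 12) (hM0 : 0 ≤ M) (haM : a ≤ M*b) (h2M : 2*M ≤ 5*σ) :
    ((1-β)*a + β*b)^2 + 2*β*(1/σ)*(b*a) + a^2/σ^2 ≤ 12*b^2 := by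
  have hβm : (0:ℝ) ≤ 1 - β := by linarith
  have hM3 : 3 ≤ M := by nlinarith
  have hsq : ((1-β)*a + β*b)^2 ≤ ((1-β)*(M*b) + β*b)^2 := by
    have h1 : (1-β)*a + β*b ≤ (1-β)*(M*b) + β*b := by nlinarith
    have h0 : 0 ≤ (1-β)*a + β*b := by nlinarith
    nlinarith
  have hscal : ((1-β)*M + β)^2 ≤ 12 - 11*β := by
    have hc0 : 0 ≤ β*(M-1) := by nlinarith
    have hc1 : β*(M-1) ≤ M-1 := by nlinarith
    nlinarith [sq_nonneg (β*(M-1))]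
  have hsq2 : ((1-β)*(M*b) + β*b)^2 ≤ (12 - 11*β)*b^2 := by
    have he : ((1-β)*(M*b) + β*b)^2 = ((1-β)*M + β)^2 * b^2 := by ring
    rw [he]; nlinarith [sq_nonneg b]
  have h5 : 2*M/σ ≤ 5 := by rw [div_le_iff₀ hσ0]; linarith
  have ht2 : 2*β*(1/σ)*(b*a) ≤ 5*β*b^2 :=
    calc 2*β*(1/σ)*(b*a) ≤ 2*β*(1/σ)*(b*(M*b)) := by gcongr
      _ = (2*M/σ)*(β*b^2) := by ring
      _ ≤ 5*(β*b^2) := mul_le_mul_of_nonneg_right h5 (by positivity)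
      _ = 5*β*b^2 := by ring
  have ht3 : a^2/σ^2 ≤ 6*β*b^2 := by
    have h1 : a^2 ≤ 12*b^2 := by nlinarith
    calc a^2/σ^2 ≤ 12*b^2/σ^2 := by gcongr
      _ = (12/σ^2)*b^2 := by ring
      _ ≤ (6*β)*b^2 := by
          apply mul_le_mul_of_nonneg_right ?_ (sq_nonneg b)
          rw [div_le_iff₀ (by positivity)]
          nlinarith
      _ = 6*β*b^2 := by ring
  linarith [hsq, hsq2, ht2, ht3]


/-- **Anchored GDA last-iterate convergence.** Under monotonicity, `K`-Lipschitzness,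
existence of a zero `zstar` of `G`, and the parameter schedules
`α t = 1/(K√(t+γ))`, `β t = γ/(t+γ)` with `γ ≥ 2`, for every `t ≥ 1` the squared
gradient norm at the last iterate satisfies `‖G(z t)‖² ≤ C / t` with
`C = K²(E + γD)²`, `D = (√12 + 1)‖z 0 − zstar‖`, `E = max (‖z 2 − z 1‖(1+γ)) (20γD)`. -/
theorem anchored_gda_last_iterate
    {H : Type*} [NormedAddCommGroup H] [InnerProductSpace ℝ H]
    (G : H → H) (K : ℝ) (hK : 0 < K)
    (hmono : ∀ z w : H, 0 ≤ ⟪G z - G w, z - w⟫)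
    (hlip : ∀ z w : H, ‖G z - G w‖ ≤ K * ‖z - w‖)
    (zstar : H) (hzstar : G zstar = 0)
    (γ : ℝ) (hγ : 2 ≤ γ)
    (α β : ℕ → ℝ)
    (hα : ∀ t : ℕ, α t = 1 / (K * Real.sqrt ((t : ℝ) + γ)))
    (hβ : ∀ t : ℕ, β t = γ / ((t : ℝ) + γ))
    (z : ℕ → H)
    (hstep : ∀ t : ℕ, z (t + 1) = z t - α t • G (z t) + β t • (z 0 - z t))
    (D E C : ℝ)
    (hD : D = (Real.sqrt 12 + 1) * ‖z 0 - zstar‖)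
    (hE : E = max (‖z 2 - z 1‖ * (1 + γ)) (20 * γ * D))
    (hC : C = K ^ 2 * (E + γ * D) ^ 2) :
    ∀ t : ℕ, 1 ≤ t → ‖G (z t)‖ ^ 2 ≤ C / t := by
  have hγ0 : (0:ℝ) < γ := by linarith
  have hb0 : (0:ℝ) ≤ ‖z 0 - zstar‖ := norm_nonneg _
  have hM2 : (Real.sqrt 12)^2 = 12 := Real.sq_sqrt (by norm_num)
  have hM0 : (0:ℝ) ≤ Real.sqrt 12 := Real.sqrt_nonneg _
  have hM3 : (3:ℝ) ≤ Real.sqrt 12 := by nlinarith [hM2, hM0]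
  have hM4 : Real.sqrt 12 ≤ 4 := by nlinarith [hM2, hM0]
  have hGle : ∀ t : ℕ, ‖G (z t)‖ ≤ K * ‖z t - zstar‖ := by
    intro t
    have := hlip (z t) zstar
    rwa [hzstar, sub_zero] at this
  -- Lemma A : boundedness of the iterates
  have hA : ∀ t : ℕ, ‖z t - zstar‖ ≤ Real.sqrt 12 * ‖z 0 - zstar‖ := by
    intro t; induction t with
    | zero => nlinarith [hb0, hM3]
    | succ n ih =>
        have hsn0 : (0:ℝ) ≤ (n:ℝ) := Nat.cast_nonneg n
        have hs0 : (0:ℝ) < (n:ℝ) + γ := by linarith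
        obtain ⟨σ, hσdef⟩ : ∃ σ, σ = Real.sqrt ((n:ℝ)+γ) := ⟨_, rfl⟩
        have hσ2 : σ^2 = (n:ℝ)+γ := by rw [hσdef]; exact Real.sq_sqrt hs0.le
        have hσ0 : (0:ℝ) < σ := by rw [hσdef]; exact Real.sqrt_pos.2 hs0
        have hαv : α n = 1/(K*σ) := by rw [hσdef]; exact hα n
        have hβv : β n = γ/((n:ℝ)+γ) := hβ n
        have hβ0 : 0 < β n := by rw [hβv]; positivity
        have hβ1 : β n ≤ 1 := by rw [hβv, div_le_one hs0]; linarith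
        have hα0 : 0 < α n := by rw [hαv]; positivity
        have hαK : α n * K = 1/σ := by rw [hαv]; field_simp
        have hv : z (n+1) - zstar
            = ((1 - β n) • (z n - zstar) + (β n) • (z 0 - zstar)) - (α n) • G (z n) := by
          rw [hstep n]; module
        have hnorm : ‖z (n+1) - zstar‖^2
            = ‖(1 - β n) • (z n - zstar) + (β n) • (z 0 - zstar)‖^2
              - 2*⟪(1 - β n) • (z n - zstar) + (β n) • (z 0 - zstar), (α n) • G (z n)⟫
              + ‖(α n) • G (z n)‖^2 := by
          rw [hv]; exact norm_sub_sq_real _ _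
        have hip : ⟪(1 - β n) • (z n - zstar) + (β n) • (z 0 - zstar), (α n) • G (z n)⟫
            = α n * ((1 - β n)*⟪z n - zstar, G (z n)⟫ + β n * ⟪z 0 - zstar, G (z n)⟫) := by
          simp [inner_add_left, real_inner_smul_left, real_inner_smul_right]; ring
        have hug : 0 ≤ ⟪z n - zstar, G (z n)⟫ := by
          have := hmono (z n) zstar
          rw [hzstar, sub_zero] at this
          rwa [real_inner_comm]
        have hvg : -(‖z 0 - zstar‖ * ‖G (z n)‖) ≤ ⟪z 0 - zstar, G (z n)⟫ :=
          neg_le_of_abs_le (abs_real_inner_le_norm _ _)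
        have hpn : ‖(1 - β n) • (z n - zstar) + (β n) • (z 0 - zstar)‖
            ≤ (1 - β n) * ‖z n - zstar‖ + β n * ‖z 0 - zstar‖ := by
          refine le_trans (norm_add_le _ _) ?_
          rw [norm_smul, norm_smul, Real.norm_eq_abs, Real.norm_eq_abs,
            abs_of_nonneg (by linarith : (0:ℝ) ≤ 1 - β n), abs_of_nonneg hβ0.le]
        have hXK : ‖G (z n)‖ ≤ K * ‖z n - zstar‖ := hGle n
        have hX0 : 0 ≤ ‖G (z n)‖ := norm_nonneg _
        have ha0 : 0 ≤ ‖z n - zstar‖ := norm_nonneg _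
        have h1 : ‖(1 - β n) • (z n - zstar) + (β n) • (z 0 - zstar)‖^2
            ≤ ((1 - β n) * ‖z n - zstar‖ + β n * ‖z 0 - zstar‖)^2 :=
          pow_le_pow_left₀ (norm_nonneg _) hpn 2
        have h2 : -(2*⟪(1 - β n) • (z n - zstar) + (β n) • (z 0 - zstar), (α n) • G (z n)⟫)
            ≤ 2*(β n)*(1/σ)*(‖z 0 - zstar‖*‖z n - zstar‖) := by
          rw [hip]
          have e1 : 0 ≤ (α n * (1 - β n)) * ⟪z n - zstar, G (z n)⟫ :=
            mul_nonneg (mul_nonneg hα0.le (by linarith)) hug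
          have e2 : -⟪z 0 - zstar, G (z n)⟫ ≤ ‖z 0 - zstar‖ * ‖G (z n)‖ := by linarith
          have e3 : (α n * β n) * (-⟪z 0 - zstar, G (z n)⟫)
              ≤ (α n * β n) * (‖z 0 - zstar‖ * ‖G (z n)‖) :=
            mul_le_mul_of_nonneg_left e2 (by positivity)
          have e4 : (α n * β n) * (‖z 0 - zstar‖ * ‖G (z n)‖)
              ≤ (α n * β n) * (‖z 0 - zstar‖ * (K * ‖z n - zstar‖)) := by
            apply mul_le_mul_of_nonneg_left ?_ (by positivity)
            exact mul_le_mul_of_nonneg_left hXK hb0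
          have e5 : (α n * β n) * (‖z 0 - zstar‖ * (K * ‖z n - zstar‖))
              = (β n)*(1/σ)*(‖z 0 - zstar‖*‖z n - zstar‖) := by
            rw [show (α n * β n) * (‖z 0 - zstar‖ * (K * ‖z n - zstar‖))
              = (α n * K) * (β n * (‖z 0 - zstar‖ * ‖z n - zstar‖)) from by ring, hαK]; ring
          linarith
        have h3 : ‖(α n) • G (z n)‖^2 ≤ ‖z n - zstar‖^2/σ^2 := by
          rw [norm_smul, Real.norm_eq_abs, abs_of_nonneg hα0.le]
          have e1 : α n * ‖G (z n)‖ ≤ (1/σ) * ‖z n - zstar‖ := by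
            calc α n * ‖G (z n)‖ ≤ α n * (K * ‖z n - zstar‖) :=
                  mul_le_mul_of_nonneg_left hXK hα0.le
              _ = (α n * K) * ‖z n - zstar‖ := by ring
              _ = (1/σ) * ‖z n - zstar‖ := by rw [hαK]
          have e2 : (α n * ‖G (z n)‖)^2 ≤ ((1/σ) * ‖z n - zstar‖)^2 :=
            pow_le_pow_left₀ (by positivity) e1 2
          have e3 : ((1/σ) * ‖z n - zstar‖)^2 = ‖z n - zstar‖^2/σ^2 := by
            field_simp
          linarith
        have hcore := lemA_core ‖z n - zstar‖ ‖z 0 - zstar‖ (β n) σ (Real.sqrt 12) γ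
          ha0 hb0 hγ (by rw [hβv, hσ2]; field_simp) hβ0 hβ1 hσ0 hM2 hM0 ih
          (aux2M _ _ hM2 hM0 hσ0 (by rw [hσ2]; linarith))
        apply sq_le_imp _ _ (by positivity) ?_ (norm_nonneg _)
        have e : (Real.sqrt 12 * ‖z 0 - zstar‖)^2 = 12*‖z 0 - zstar‖^2 := by
          rw [mul_pow, hM2]
        rw [e]
        linarith
  -- consequences of Lemma A
  have hD0 : 0 ≤ D := by rw [hD]; positivity
  have hE20 : 20*γ*D ≤ E := by rw [hE]; exact le_max_right _ _
  have hE0 : (0:ℝ) ≤ E := le_trans (by positivity) hE20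
  have hW : ∀ t : ℕ, ‖z t - z 0‖ ≤ D := by
    intro t
    have h1 : ‖z t - z 0‖ ≤ ‖z t - zstar‖ + ‖zstar - z 0‖ := by
      calc ‖z t - z 0‖ = ‖(z t - zstar) + (zstar - z 0)‖ := by rw [sub_add_sub_cancel]
        _ ≤ ‖z t - zstar‖ + ‖zstar - z 0‖ := norm_add_le _ _
    have h2 : ‖zstar - z 0‖ = ‖z 0 - zstar‖ := norm_sub_rev _ _
    rw [hD]
    have := hA t
    nlinarith [hb0]
  have hGD : ∀ t : ℕ, ‖G (z t)‖ ≤ K * (Real.sqrt 12 * ‖z 0 - zstar‖) := by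
    intro t
    calc ‖G (z t)‖ ≤ K * ‖z t - zstar‖ := hGle t
      _ ≤ K * (Real.sqrt 12 * ‖z 0 - zstar‖) := mul_le_mul_of_nonneg_left (hA t) hK.le
  -- Lemma B : decay of consecutive differences
  have hB : ∀ n : ℕ, ‖z (n+2) - z (n+1)‖ ≤ E / ((n:ℝ)+1+γ) := by
    intro n; induction n with
    | zero =>
        have h1 : ‖z 2 - z 1‖ * (1+γ) ≤ E := by rw [hE]; exact le_max_left _ _
        have h2 : (0:ℝ) < (0:ℕ) + 1 + γ := by norm_num; linarith
        rw [le_div_iff₀ h2]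
        push_cast
        calc ‖z (0+2) - z (0+1)‖ * (0 + 1 + γ) = ‖z 2 - z 1‖ * (1+γ) := by norm_num
          _ ≤ E := h1
    | succ n ih =>
        have hcast : ((n+1:ℕ):ℝ) + 1 + γ = (n:ℝ)+2+γ := by push_cast; ring
        rw [show n+1+2 = n+3 from by omega, show n+1+1 = n+2 from by omega, hcast]
        have hn0 : (0:ℝ) ≤ (n:ℝ) := Nat.cast_nonneg n
        have hp0 : (0:ℝ) < (n:ℝ)+1+γ := by linarith
        have hs0 : (0:ℝ) < (n:ℝ)+2+γ := by linarith
        obtain ⟨τ, hτdef⟩ : ∃ τ, τ = Real.sqrt ((n:ℝ)+1+γ) := ⟨_, rfl⟩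
        obtain ⟨σ, hσdef⟩ : ∃ σ, σ = Real.sqrt ((n:ℝ)+2+γ) := ⟨_, rfl⟩
        have hτ2 : τ^2 = (n:ℝ)+1+γ := by rw [hτdef]; exact Real.sq_sqrt hp0.le
        have hσ2 : σ^2 = (n:ℝ)+2+γ := by rw [hσdef]; exact Real.sq_sqrt hs0.le
        have hτ0 : (0:ℝ) < τ := by rw [hτdef]; exact Real.sqrt_pos.2 hp0
        have hσ0 : (0:ℝ) < σ := by rw [hσdef]; exact Real.sqrt_pos.2 hs0
        have hστ : σ^2 = τ^2 + 1 := by rw [hσ2, hτ2]; ring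
        have hτσ : τ ≤ σ := by
          apply sq_le_imp _ _ hσ0.le ?_ hτ0.le
          rw [hστ]; linarith only [sq_nonneg τ]
        have ecast1 : ((n+1:ℕ):ℝ) + γ = (n:ℝ)+1+γ := by push_cast; ring
        have ecast2 : ((n+2:ℕ):ℝ) + γ = (n:ℝ)+2+γ := by push_cast; ring
        have hα1 : α (n+1) = 1/(K*τ) := by rw [hα (n+1), ecast1, hτdef]
        have hα2 : α (n+2) = 1/(K*σ) := by rw [hα (n+2), ecast2, hσdef]
        have hβ1v : β (n+1) = γ/τ^2 := by rw [hβ (n+1), ecast1, hτ2]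
        have hβ2v : β (n+2) = γ/σ^2 := by rw [hβ (n+2), ecast2, hσ2]
        have hα10 : 0 < α (n+1) := by rw [hα1]; positivity
        have hα20 : 0 < α (n+2) := by rw [hα2]; positivity
        have hβ10 : 0 < β (n+1) := by rw [hβ1v]; positivity
        have hβ20 : 0 < β (n+2) := by rw [hβ2v]; positivity
        have hβ21 : β (n+2) ≤ 1 := by
          rw [hβ2v, div_le_one (by positivity), hσ2]; linarith
        have h1β : (0:ℝ) ≤ 1 - β (n+2) := by linarith
        have h1β1 : 1 - β (n+2) ≤ 1 := by linarith
        have hs1 := hstep (n+1)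
        rw [show n+1+1 = n+2 from by omega] at hs1
        have hs2 := hstep (n+2)
        rw [show n+2+1 = n+3 from by omega] at hs2
        by_cases hcase : Real.sqrt 12 * ‖z 0 - zstar‖ * σ ≤ E - γ*D
        · -- easy case : gradient still large is impossible; direct bound
          have hv1 : z (n+3) - z (n+2)
              = -((α (n+2)) • G (z (n+2))) + (β (n+2)) • (z 0 - z (n+2)) := by
            rw [hs2]; module
          have h1 : ‖z (n+3) - z (n+2)‖
              ≤ α (n+2) * ‖G (z (n+2))‖ + β (n+2) * ‖z 0 - z (n+2)‖ := by
            rw [hv1]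
            refine le_trans (norm_add_le _ _) ?_
            rw [norm_neg, norm_smul, norm_smul, Real.norm_eq_abs, Real.norm_eq_abs,
              abs_of_nonneg hα20.le, abs_of_nonneg hβ20.le]
          have h2 : α (n+2) * ‖G (z (n+2))‖ ≤ (E - γ*D)/σ^2 := by
            calc α (n+2) * ‖G (z (n+2))‖
                ≤ α (n+2) * (K * (Real.sqrt 12 * ‖z 0 - zstar‖)) :=
                  mul_le_mul_of_nonneg_left (hGD (n+2)) hα20.le
              _ = (Real.sqrt 12 * ‖z 0 - zstar‖ * σ)/σ^2 := by
                  rw [hα2]; field_simp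
              _ ≤ (E - γ*D)/σ^2 := (div_le_div_iff_of_pos_right (by positivity)).mpr hcase
          have h3 : β (n+2) * ‖z 0 - z (n+2)‖ ≤ (γ*D)/σ^2 := by
            rw [hβ2v]
            calc (γ/σ^2) * ‖z 0 - z (n+2)‖ ≤ (γ/σ^2)*D := by
                  apply mul_le_mul_of_nonneg_left ?_ (by positivity)
                  rw [norm_sub_rev]; exact hW (n+2)
              _ = (γ*D)/σ^2 := by ring
          have h4 : (E - γ*D)/σ^2 + (γ*D)/σ^2 = E/σ^2 := by ring
          rw [← hσ2]
          linarith only [h1, h2, h3, h4]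
        · -- hard case
          push_neg at hcase
          have hbpos : 0 < ‖z 0 - zstar‖ := by
            rcases eq_or_lt_of_le hb0 with he | h
            · exfalso
              have hD0' : D = 0 := by rw [hD, ← he]; ring
              rw [hD0', ← he] at hcase
              simp at hcase
              linarith only [hcase, hE0]
            · exact h
          have hσ23 : 23*γ ≤ σ := by
            apply case2_sigma (Real.sqrt 12) σ γ hM3 hM4 hγ0
            have h1 : 19*γ*D ≤ E - γ*D := by linarith only [hE20]
            have h2 : 19*γ*D < Real.sqrt 12 * ‖z 0 - zstar‖ * σ := lt_of_le_of_lt h1 hcase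
            rw [hD] at h2
            have h3 : (19*γ*(Real.sqrt 12 + 1)) * ‖z 0 - zstar‖
                < (Real.sqrt 12 * σ) * ‖z 0 - zstar‖ := by
              have e1 : 19*γ*((Real.sqrt 12 + 1) * ‖z 0 - zstar‖)
                  = (19*γ*(Real.sqrt 12 + 1)) * ‖z 0 - zstar‖ := by ring
              have e2 : Real.sqrt 12 * ‖z 0 - zstar‖ * σ
                  = (Real.sqrt 12 * σ) * ‖z 0 - zstar‖ := by ring
              rw [e1, e2] at h2; exact h2
            exact (lt_of_mul_lt_mul_right h3 hbpos.le).le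
          -- abbreviations
          obtain ⟨d, hd_def⟩ : ∃ v, v = z (n+2) - z (n+1) := ⟨_, rfl⟩
          obtain ⟨w, hw_def⟩ : ∃ v, v = z (n+1) - z 0 := ⟨_, rfl⟩
          obtain ⟨g, hg_def⟩ : ∃ v, v = G (z (n+1)) := ⟨_, rfl⟩
          obtain ⟨Δ, hΔ_def⟩ : ∃ v, v = G (z (n+2)) - G (z (n+1)) := ⟨_, rfl⟩
          have hd : d = -((α (n+1)) • g) - (β (n+1)) • w := by
            rw [hd_def, hg_def, hw_def, hs1]; module
          have hid : z (n+3) - z (n+2)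
              = ((1 - β (n+2)) • d - (α (n+2)) • Δ)
                + ((β (n+1) - β (n+2)) • w + (α (n+1) - α (n+2)) • g) := by
            rw [hd_def, hg_def, hw_def, hΔ_def, hs2, hs1]; module
          -- basic scalar facts about the iterates
          have hdn0 : (0:ℝ) ≤ ‖d‖ := norm_nonneg _
          have ihd : ‖d‖ ≤ E/τ^2 := by rw [hd_def, hτ2]; exact ih
          have hdnτ : ‖d‖ * τ^2 ≤ E := by
            exact (le_div_iff₀ (by positivity : (0:ℝ) < τ^2)).mp ihd
          have hwD : ‖w‖ ≤ D := by rw [hw_def]; exact hW (n+1)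
          have hΔK : ‖Δ‖ ≤ K*‖d‖ := by rw [hΔ_def, hd_def]; exact hlip _ _
          have hΔd : 0 ≤ ⟪d, Δ⟫ := by
            rw [hd_def, hΔ_def, real_inner_comm]
            exact hmono (z (n+2)) (z (n+1))
          have hg0 : (0:ℝ) ≤ ‖g‖ := norm_nonneg _
          have hx0 : (0:ℝ) ≤ ‖g‖/K := by positivity
          -- bound on ‖g‖ via the previous step
          have hgx : (‖g‖/K)*τ ≤ E + γ*D := by
            have hvg2 : (α (n+1)) • g = -d - (β (n+1)) • w := by rw [hd]; module
            have h1 : α (n+1) * ‖g‖ ≤ ‖d‖ + (β (n+1))*‖w‖ := by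
              have e : ‖(α (n+1)) • g‖ ≤ ‖-d‖ + ‖(β (n+1)) • w‖ := by
                rw [hvg2]; exact norm_sub_le _ _
              rw [norm_neg, norm_smul, norm_smul, Real.norm_eq_abs, Real.norm_eq_abs,
                abs_of_nonneg hα10.le, abs_of_nonneg hβ10.le] at e
              exact e
            have h2 : (β (n+1))*‖w‖ ≤ (γ/τ^2)*D := by
              rw [hβ1v]
              exact mul_le_mul_of_nonneg_left hwD (by positivity)
            have h3 : α (n+1) * ‖g‖ ≤ (E + γ*D)/τ^2 := by
              have e : E/τ^2 + (γ/τ^2)*D = (E + γ*D)/τ^2 := by ring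
              linarith only [h1, h2, e, ihd]
            calc (‖g‖/K)*τ = τ^2 * (α (n+1) * ‖g‖) := by
                  rw [hα1]; field_simp
              _ ≤ τ^2 * ((E + γ*D)/τ^2) :=
                  mul_le_mul_of_nonneg_left h3 (by positivity)
              _ = E + γ*D := by field_simp
          -- monotonicity-based bound on ⟪d, g⟫
          have hdg : ⟪d, g⟫ ≤ (γ/τ^2)*(‖z 0 - zstar‖*‖g‖) := by
            have hip2 : ⟪d, g⟫ = -((α (n+1))*‖g‖^2) - (β (n+1))*⟪w, g⟫ := by
              rw [hd]
              simp [inner_sub_left, inner_neg_left, real_inner_smul_left,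
                real_inner_self_eq_norm_sq]
            have hwg : -(‖z 0 - zstar‖*‖g‖) ≤ ⟪w, g⟫ := by
              have e : ⟪w, g⟫ = ⟪z (n+1) - zstar, g⟫ + ⟪zstar - z 0, g⟫ := by
                rw [hw_def, show z (n+1) - z 0 = (z (n+1) - zstar) + (zstar - z 0) from
                  by abel]
                exact inner_add_left _ _ _
              have e1 : 0 ≤ ⟪z (n+1) - zstar, g⟫ := by
                rw [hg_def, real_inner_comm]
                have := hmono (z (n+1)) zstar
                rwa [hzstar, sub_zero] at this
              have e2 : -(‖zstar - z 0‖*‖g‖) ≤ ⟪zstar - z 0, g⟫ :=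
                neg_le_of_abs_le (abs_real_inner_le_norm _ _)
              have e3 : ‖zstar - z 0‖ = ‖z 0 - zstar‖ := norm_sub_rev _ _
              rw [e]; rw [e3] at e2; linarith only [e1, e2]
            have t1 : 0 ≤ (α (n+1))*‖g‖^2 := by positivity
            have t2 : (β (n+1))*(-⟪w,g⟫) ≤ (β (n+1))*(‖z 0 - zstar‖*‖g‖) :=
              mul_le_mul_of_nonneg_left (by linarith only [hwg]) hβ10.le
            rw [← hβ1v]
            linarith only [hip2, t1, t2]
          -- coefficient facts
          have hβd : β (n+1) - β (n+2) = γ/(τ^2*σ^2) := by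
            rw [hβ1v, hβ2v, div_sub_div _ _ (by positivity : (τ:ℝ)^2 ≠ 0)
              (by positivity : (σ:ℝ)^2 ≠ 0),
              show γ*σ^2 - τ^2*γ = γ from by rw [hστ]; ring]
          have hβd0 : 0 ≤ β (n+1) - β (n+2) := by rw [hβd]; positivity
          have hαd0 : 0 ≤ α (n+1) - α (n+2) := by
            rw [hα1, hα2, sub_nonneg]
            exact div_le_div_of_nonneg_left zero_le_one (by positivity)
              (mul_le_mul_of_nonneg_left hτσ hK.le)
          have hα2K : α (n+2) * K = 1/σ := by rw [hα2]; field_simp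
          have hαdK : (α (n+1) - α (n+2))*K ≤ 1/(2*τ^3) := by
            have e : (α (n+1) - α (n+2))*K = (σ - τ)/(σ*τ) := by
              rw [hα1, hα2]; field_simp
            have h1 : (σ-τ)*(σ+τ) = 1 := by linear_combination hστ
            have h2 : σ - τ ≤ 1/(2*τ) := by
              rw [le_div_iff₀ (by positivity)]
              have hz : 0 ≤ (σ-τ)*((σ+τ)-2*τ) :=
                mul_nonneg (by linarith only [hτσ]) (by linarith only [hτσ])
              linarith only [h1, hz]
            have h3 : (σ-τ)/(σ*τ) ≤ (1/(2*τ))/(σ*τ) :=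
              (div_le_div_iff_of_pos_right (by positivity)).mpr h2
            have h4 : (1/(2*τ))/(σ*τ) = 1/(2*σ*τ^2) := by field_simp
            have h5 : 1/(2*σ*τ^2) ≤ 1/(2*τ^3) := by
              apply div_le_div_of_nonneg_left zero_le_one (by positivity)
              have := mul_le_mul_of_nonneg_right hτσ (by positivity : (0:ℝ) ≤ τ^2)
              linarith only [this]
            rw [e]; linarith only [h3, h4, h5]
          have hαdKle : α (n+1) - α (n+2) ≤ (1/(2*τ^3))/K := by
            rw [le_div_iff₀ hK]; exact hαdK
          -- norm-squared of P
          have hPsq : ‖(1 - β (n+2)) • d - (α (n+2)) • Δ‖^2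
              ≤ ((1-γ/σ^2)^2 + 1/σ^2)*‖d‖^2 := by
            have e0 : ‖(1 - β (n+2)) • d - (α (n+2)) • Δ‖^2
                = ‖(1 - β (n+2)) • d‖^2 - 2*⟪(1 - β (n+2)) • d, (α (n+2)) • Δ⟫
                  + ‖(α (n+2)) • Δ‖^2 := norm_sub_sq_real _ _
            have e1 : ‖(1 - β (n+2)) • d‖^2 = (1 - β (n+2))^2*‖d‖^2 := by
              rw [norm_smul, Real.norm_eq_abs, abs_of_nonneg h1β, mul_pow]
            have e2 : ⟪(1 - β (n+2)) • d, (α (n+2)) • Δ⟫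
                = ((1 - β (n+2))*(α (n+2)))*⟪d, Δ⟫ := by
              rw [real_inner_smul_left, real_inner_smul_right]; ring
            have e3 : 0 ≤ ((1 - β (n+2))*(α (n+2)))*⟪d, Δ⟫ :=
              mul_nonneg (mul_nonneg h1β hα20.le) hΔd
            have e4 : ‖(α (n+2)) • Δ‖^2 ≤ (1/σ^2)*‖d‖^2 := by
              rw [norm_smul, Real.norm_eq_abs, abs_of_nonneg hα20.le, mul_pow]
              have e5 : (α (n+2))^2*‖Δ‖^2 ≤ (α (n+2))^2*(K*‖d‖)^2 :=
                mul_le_mul_of_nonneg_left (pow_le_pow_left₀ (norm_nonneg _) hΔK 2)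
                  (by positivity)
              have e6 : (α (n+2))^2*(K*‖d‖)^2 = ((α (n+2))*K)^2*‖d‖^2 := by ring
              have e7 : ((α (n+2))*K)^2*‖d‖^2 = (1/σ^2)*‖d‖^2 := by
                rw [hα2K]
                have : ((1:ℝ)/σ)^2 = 1/σ^2 := by rw [div_pow]; norm_num
                rw [this]
              linarith only [e5, e6, e7]
            have e8 : (1 - β (n+2))^2 = (1-γ/σ^2)^2 := by rw [hβ2v]
            rw [e0, e1, e2, e8]
            linarith only [e3, e4]
          -- cross term
          have hPq : ⟪(1 - β (n+2)) • d - (α (n+2)) • Δ,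
                (β (n+1) - β (n+2)) • w + (α (n+1) - α (n+2)) • g⟫
              ≤ (γ/(τ^2*σ^2))*(‖d‖*D)
                + (1/(2*τ^3))*((γ/τ^2)*(‖z 0 - zstar‖*(‖g‖/K)))
                + (1/σ)*(γ/(τ^2*σ^2))*(‖d‖*D)
                + (1/σ)*(1/(2*τ^3))*(‖d‖*(‖g‖/K)) := by
            have eip : ⟪(1 - β (n+2)) • d - (α (n+2)) • Δ,
                  (β (n+1) - β (n+2)) • w + (α (n+1) - α (n+2)) • g⟫
                = ((1-β (n+2))*(β (n+1) - β (n+2)))*⟪d,w⟫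
                  + ((1-β (n+2))*(α (n+1) - α (n+2)))*⟪d,g⟫
                  + ((α (n+2))*(β (n+1) - β (n+2)))*(-⟪Δ,w⟫)
                  + ((α (n+2))*(α (n+1) - α (n+2)))*(-⟪Δ,g⟫) := by
              simp only [inner_sub_left, inner_add_right, real_inner_smul_left,
                real_inner_smul_right]
              ring
            have hdw : ⟪d,w⟫ ≤ ‖d‖*D :=
              le_trans (real_inner_le_norm _ _) (mul_le_mul_of_nonneg_left hwD hdn0)
            have hΔw : -⟪Δ,w⟫ ≤ (K*‖d‖)*D := by
              have := neg_le_of_abs_le (abs_real_inner_le_norm Δ w)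
              have h2 : ‖Δ‖*‖w‖ ≤ (K*‖d‖)*D :=
                mul_le_mul hΔK hwD (norm_nonneg _) (by positivity)
              linarith only [this, h2]
            have hΔg : -⟪Δ,g⟫ ≤ (K*‖d‖)*‖g‖ := by
              have := neg_le_of_abs_le (abs_real_inner_le_norm Δ g)
              have h2 : ‖Δ‖*‖g‖ ≤ (K*‖d‖)*‖g‖ :=
                mul_le_mul_of_nonneg_right hΔK hg0
              linarith only [this, h2]
            have p1 : ((1-β (n+2))*(β (n+1) - β (n+2)))*⟪d,w⟫
                ≤ (γ/(τ^2*σ^2))*(‖d‖*D) := by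
              apply mul_le_mul4 _ _ _ _ (mul_nonneg h1β hβd0) ?_ hdw (by positivity)
              rw [← hβd]
              exact mul_le_of_le_one_left hβd0 h1β1
            have p2 : ((1-β (n+2))*(α (n+1) - α (n+2)))*⟪d,g⟫
                ≤ (1/(2*τ^3))*((γ/τ^2)*(‖z 0 - zstar‖*(‖g‖/K))) := by
              have q1 : ((1-β (n+2))*(α (n+1) - α (n+2)))*⟪d,g⟫
                  ≤ ((1/(2*τ^3))/K)*((γ/τ^2)*(‖z 0 - zstar‖*‖g‖)) := by
                apply mul_le_mul4 _ _ _ _ (mul_nonneg h1β hαd0) ?_ hdg (by positivity)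
                exact le_trans (mul_le_of_le_one_left hαd0 h1β1) hαdKle
              have q2 : ((1/(2*τ^3))/K)*((γ/τ^2)*(‖z 0 - zstar‖*‖g‖))
                  = (1/(2*τ^3))*((γ/τ^2)*(‖z 0 - zstar‖*(‖g‖/K))) := by ring
              linarith only [q1, q2]
            have p3 : ((α (n+2))*(β (n+1) - β (n+2)))*(-⟪Δ,w⟫)
                ≤ (1/σ)*(γ/(τ^2*σ^2))*(‖d‖*D) := by
              have q1 : ((α (n+2))*(β (n+1) - β (n+2)))*(-⟪Δ,w⟫)
                  ≤ ((α (n+2))*(β (n+1) - β (n+2)))*((K*‖d‖)*D) :=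
                mul_le_mul_of_nonneg_left hΔw (mul_nonneg hα20.le hβd0)
              have q2 : ((α (n+2))*(β (n+1) - β (n+2)))*((K*‖d‖)*D)
                  = (1/σ)*(γ/(τ^2*σ^2))*(‖d‖*D) := by
                rw [hα2, hβd]; field_simp
              linarith only [q1, q2]
            have p4 : ((α (n+2))*(α (n+1) - α (n+2)))*(-⟪Δ,g⟫)
                ≤ (1/σ)*(1/(2*τ^3))*(‖d‖*(‖g‖/K)) := by
              have q1 : ((α (n+2))*(α (n+1) - α (n+2)))*(-⟪Δ,g⟫)
                  ≤ ((α (n+2))*(α (n+1) - α (n+2)))*((K*‖d‖)*‖g‖) :=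
                mul_le_mul_of_nonneg_left hΔg (mul_nonneg hα20.le hαd0)
              have q2 : ((α (n+2))*(α (n+1) - α (n+2)))*((K*‖d‖)*‖g‖)
                  = (((α (n+2))*K)*((α (n+1) - α (n+2))*K))*(‖d‖*(‖g‖/K)) := by
                field_simp
              have q3 : (((α (n+2))*K)*((α (n+1) - α (n+2))*K))*(‖d‖*(‖g‖/K))
                  ≤ ((1/σ)*(1/(2*τ^3)))*(‖d‖*(‖g‖/K)) := by
                apply mul_le_mul_of_nonneg_right ?_ (by positivity)
                rw [hα2K]
                apply mul_le_mul_of_nonneg_left hαdK (by positivity)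
              have q4 : ((1/σ)*(1/(2*τ^3)))*(‖d‖*(‖g‖/K))
                  = (1/σ)*(1/(2*τ^3))*(‖d‖*(‖g‖/K)) := by ring
              rw [q2] at q1
              linarith only [q1, q3, q4]
            rw [eip]
            linarith only [p1, p2, p3, p4]
          -- norm of q
          have hq : ‖(β (n+1) - β (n+2)) • w + (α (n+1) - α (n+2)) • g‖
              ≤ (γ/(τ^2*σ^2))*D + (1/(2*τ^3))*(‖g‖/K) := by
            refine le_trans (norm_add_le _ _) ?_
            rw [norm_smul, norm_smul, Real.norm_eq_abs, Real.norm_eq_abs,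
              abs_of_nonneg hβd0, abs_of_nonneg hαd0]
            have q1 : (β (n+1) - β (n+2))*‖w‖ ≤ (γ/(τ^2*σ^2))*D := by
              rw [hβd]
              exact mul_le_mul_of_nonneg_left hwD (by positivity)
            have q2 : (α (n+1) - α (n+2))*‖g‖ ≤ (1/(2*τ^3))*(‖g‖/K) := by
              have := mul_le_mul_of_nonneg_right hαdKle hg0
              have e : ((1/(2*τ^3))/K)*‖g‖ = (1/(2*τ^3))*(‖g‖/K) := by ring
              linarith only [this, e]
            linarith only [q1, q2]
          have hq2 : ‖(β (n+1) - β (n+2)) • w + (α (n+1) - α (n+2)) • g‖^2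
              ≤ ((γ/(τ^2*σ^2))*D + (1/(2*τ^3))*(‖g‖/K))^2 :=
            pow_le_pow_left₀ (norm_nonneg _) hq 2
          -- assemble
          have htot : ‖z (n+3) - z (n+2)‖^2
              = ‖(1 - β (n+2)) • d - (α (n+2)) • Δ‖^2
                + 2*⟪(1 - β (n+2)) • d - (α (n+2)) • Δ,
                    (β (n+1) - β (n+2)) • w + (α (n+1) - α (n+2)) • g⟫
                + ‖(β (n+1) - β (n+2)) • w + (α (n+1) - α (n+2)) • g‖^2 := by
            rw [hid]; exact norm_add_sq_real _ _
          have hcore := lemB_core E D ‖z 0 - zstar‖ γ σ τ ‖d‖ (‖g‖/K)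
            hγ hbpos hD hE20 hσ23 hτ0 hστ hdn0 hdnτ hx0 hgx
          have hfin2 : ‖z (n+3) - z (n+2)‖^2 ≤ (E/σ^2)^2 := by
            rw [htot]
            linarith only [hPsq, hPq, hq2, hcore]
          rw [← hσ2]
          exact sq_le_imp _ _ (by positivity) hfin2 (norm_nonneg _)
  -- final assembly
  intro t ht
  obtain ⟨n, rfl⟩ : ∃ n, t = n+1 := ⟨t-1, by omega⟩
  have hs0 : (0:ℝ) < (n:ℝ)+1+γ := by positivity
  obtain ⟨σ, hσdef⟩ : ∃ σ, σ = Real.sqrt ((n:ℝ)+1+γ) := ⟨_, rfl⟩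
  have hσ2 : σ^2 = (n:ℝ)+1+γ := by rw [hσdef]; exact Real.sq_sqrt hs0.le
  have hσ0 : (0:ℝ) < σ := by rw [hσdef]; exact Real.sqrt_pos.2 hs0
  have ecast1 : ((n+1:ℕ):ℝ) + γ = (n:ℝ)+1+γ := by push_cast; ring
  have hα1 : α (n+1) = 1/(K*σ) := by rw [hα (n+1), ecast1, hσdef]
  have hβ1v : β (n+1) = γ/σ^2 := by rw [hβ (n+1), ecast1, hσ2]
  have hα10 : 0 < α (n+1) := by rw [hα1]; positivity
  have hs1 := hstep (n+1)
  rw [show n+1+1 = n+2 from by omega] at hs1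
  have hvec : (α (n+1)) • G (z (n+1)) = (z (n+1) - z (n+2)) + (β (n+1)) • (z 0 - z (n+1)) := by
    rw [hs1]; module
  have hdn : ‖z (n+2) - z (n+1)‖ ≤ E/σ^2 := by rw [hσ2]; exact hB n
  have hnb : ‖z 0 - z (n+1)‖ ≤ D := by rw [norm_sub_rev]; exact hW (n+1)
  have hib : α (n+1) * ‖G (z (n+1))‖ ≤ E/σ^2 + (γ/σ^2)*D := by
    have h1 : ‖(α (n+1)) • G (z (n+1))‖
        ≤ ‖z (n+1) - z (n+2)‖ + ‖(β (n+1)) • (z 0 - z (n+1))‖ := by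
      rw [hvec]; exact norm_add_le _ _
    rw [norm_smul, Real.norm_eq_abs, abs_of_nonneg hα10.le] at h1
    have h2 : ‖(β (n+1)) • (z 0 - z (n+1))‖ ≤ (γ/σ^2)*D := by
      rw [norm_smul, Real.norm_eq_abs, hβ1v, abs_of_nonneg (by positivity : (0:ℝ) ≤ γ/σ^2)]
      exact mul_le_mul_of_nonneg_left hnb (by positivity)
    have h3 : ‖z (n+1) - z (n+2)‖ ≤ E/σ^2 := by rw [norm_sub_rev]; exact hdn
    linarith
  have hKE0 : (0:ℝ) ≤ K*(E+γ*D) := by positivity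
  have hGb : ‖G (z (n+1))‖ ≤ K*(E+γ*D)/σ := by
    have h1 : α (n+1) * ‖G (z (n+1))‖ ≤ (E + γ*D)/σ^2 := by
      have : E/σ^2 + (γ/σ^2)*D = (E + γ*D)/σ^2 := by ring
      linarith [hib]
    have h2 : (K*σ) * (α (n+1) * ‖G (z (n+1))‖) = ‖G (z (n+1))‖ := by
      rw [hα1]; field_simp
    calc ‖G (z (n+1))‖ = (K*σ) * (α (n+1) * ‖G (z (n+1))‖) := h2.symm
      _ ≤ (K*σ) * ((E + γ*D)/σ^2) := mul_le_mul_of_nonneg_left h1 (by positivity)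
      _ = K*(E+γ*D)/σ := by field_simp
  have hfin : ‖G (z (n+1))‖^2 ≤ C/((n:ℝ)+1+γ) := by
    have h1 : ‖G (z (n+1))‖^2 ≤ (K*(E+γ*D)/σ)^2 :=
      pow_le_pow_left₀ (norm_nonneg _) hGb 2
    have h2 : (K*(E+γ*D)/σ)^2 = C/((n:ℝ)+1+γ) := by
      rw [hC, ← hσ2]; field_simp
    linarith
  have hmon : C/((n:ℝ)+1+γ) ≤ C/(((n+1:ℕ):ℝ)) := by
    have hC0 : 0 ≤ C := by rw [hC]; positivity
    push_cast
    apply div_le_div_of_nonneg_left hC0 (by positivity)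
    linarith
  linarith
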